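/- arXiv:1907.07628 — 4 statements merged into one kernel-verified Lean document; each statement's English description precedes it below -/
import Mathlib

section
/- Suppose e(z*) - e(x) ≤ (1+l)w < e(z*) - e(y*), with piecewise linear cost. Then the compromising price of x is p^comp = (u(x) + l·v(x))/(1+l) + ((k-l)/((1+k)(1+l)))·e(z*) - (k/(1+k))·e(y*) - ((k-l)/(1+k))·w. -/
/-- Lower-branch solution of the compromising price equation. -/
theorem stmt_7 (k l w : ℝ) (hk : 1 < k) (hl1 : l < 1) (hl0 : 0 < l)
    (hw : 0 ≤ w) (ux vx uz vz ey p : ℝ)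
    (hzx : (vz - uz) - (vx - ux) ≤ (1 + l) * w)
    (hzy : (1 + l) * w < (vz - uz) - ey)
    (pz : ℝ) (hpz : pz = (uz + k * (vz - ey - w) + l * w) / (1 + k))
    (hp : p = ux + pz - uz -
      (if vz - pz - vx + p ≤ w then l * (vz - pz - vx + p)
        else k * (vz - pz - vx + p - w) + l * w)) :
    p = (ux + l * vx) / (1 + l)
        + ((k - l) / ((1 + k) * (1 + l))) * (vz - uz)
        - (k / (1 + k)) * ey - ((k - l) / (1 + k)) * w := by
  have hk0 : (0:ℝ) < 1 + k := by linarith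
  have hl0' : (0:ℝ) < 1 + l := by linarith
  have hpz' : (1 + k) * pz = uz + k * (vz - ey - w) + l * w := by
    rw [hpz]; field_simp
  by_cases hcase : vz - pz - vx + p ≤ w
  · rw [if_pos hcase] at hp
    have key : (1 + l) * p = ux - uz - l * (vz - vx) + (1 + l) * pz := by linarith
    have comb : (1+k)*((1+l)*p) = (1+k)*(ux - uz - l*(vz-vx)) + (1+l)*((1+k)*pz) := by
      linear_combination (1+k)*key
    rw [hpz'] at comb
    field_simp
    linear_combination comb
  · exfalso
    rw [if_neg hcase] at hp
    push_neg at hcase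
    -- from hp: (1+k)(vz - pz - vx + p) = (vz-uz)-(vx-ux) + (k-l)w ≤ (1+k)w
    nlinarith [hzx, hp, hcase]
end

section
/- If e(z*) - e(y*) ≤ (1+l)w (so e(x) - e(y*) ≤ (1+l)w for any x with e(x) ≤ e(z*)), then the optimal compromising price of x equals the optimal indulging price of x, namely both equal (u(x) + l(v(x) - e(y*)))/(1+l). -/
/-- When `e(z*) - e(y*) ≤ (1+l)w`, the compromising and indulging prices
of `x` coincide and equal `(u(x) + l(v(x) - e(y*)))/(1+l)`. -/
theorem stmt_8 (k l w : ℝ) (hk : 1 < k) (hl1 : l < 1) (hl0 : 0 < l)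
    (hw : 0 ≤ w) (ux vx uz vz ey pz pind pcomp : ℝ)
    (hord1 : ey ≤ vx - ux) (hord2 : vx - ux ≤ vz - uz)
    (hzy : (vz - uz) - ey ≤ (1 + l) * w)
    (hpz : pz = uz + (if vz - pz - ey ≤ w then l * (vz - pz - ey)
        else k * (vz - pz - ey - w) + l * w))
    (hind : pind = ux + (if vx - pind - ey ≤ w then l * (vx - pind - ey)
        else k * (vx - pind - ey - w) + l * w))
    (hcomp : pcomp = ux + pz - uz -
      (if vz - pz - vx + pcomp ≤ w then l * (vz - pz - vx + pcomp)
        else k * (vz - pz - vx + pcomp - w) + l * w)) :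
    pcomp = (ux + l * (vx - ey)) / (1 + l) ∧
      pind = (ux + l * (vx - ey)) / (1 + l) := by
  have h1l : (1 + l) ≠ 0 := by linarith
  split_ifs at hpz hind hcomp with h1 h2 h3
  · constructor
    · rw [eq_div_iff h1l]; linear_combination hcomp + hpz
    · rw [eq_div_iff h1l]; linear_combination hind
  · exfalso
    push_neg at h3
    nlinarith [mul_pos (show (0:ℝ) < 1 + k by linarith)
      (show (0:ℝ) < vz - pz - vx + pcomp - w by linarith)]
  · exfalso
    push_neg at h2
    nlinarith [mul_pos (show (0:ℝ) < 1 + k by linarith)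
      (show (0:ℝ) < vx - pind - ey - w by linarith)]
  · exfalso
    push_neg at h2
    nlinarith [mul_pos (show (0:ℝ) < 1 + k by linarith)
      (show (0:ℝ) < vx - pind - ey - w by linarith)]
  all_goals
    exfalso
    push_neg at h1
    nlinarith [mul_pos (show (0:ℝ) < 1 + k by linarith)
      (show (0:ℝ) < vz - pz - ey - w by linarith)]
end

section
/- If the per-unit self-control cost is strictly convex, then for any alternative x with e(y*) < e(x) < e(z*), the compromising price p^comp defined implicitly by p^comp = u(x) + p(z*) - u(z*) - φ(v(z*) - p(z*) - v(x) + p^comp) strictly exceeds the indulging price p^ind defined by p^ind = u(x) + φ(v(x) - p^ind - e(y*)), where p(z*) solves p(z*) = u(z*) + φ(v(z*) - p(z*) - e(y*)). Here assume all solutions exist with nonnegative arguments of φ. -/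
lemma superadd_of_strictConvex (φ : ℝ → ℝ)
    (hconv : StrictConvexOn ℝ (Set.Ici (0:ℝ)) φ)
    (hφ0 : φ 0 = 0) {b c : ℝ} (hb : 0 < b) (hc : 0 < c) :
    φ b + φ c < φ (b + c) := by
  have hbc : 0 < b + c := by linarith
  have h0 : (0:ℝ) ∈ Set.Ici (0:ℝ) := Set.mem_Ici.mpr le_rfl
  have hbcmem : b + c ∈ Set.Ici (0:ℝ) := le_of_lt hbc
  have hne : (0:ℝ) ≠ b + c := by linarith
  have h1 := hconv.2 h0 hbcmem hne (div_pos hc hbc) (div_pos hb hbc)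
    (by field_simp; ring)
  have h2 := hconv.2 h0 hbcmem hne (div_pos hb hbc) (div_pos hc hbc)
    (by field_simp)
  simp only [smul_eq_mul, mul_zero, zero_add, hφ0] at h1 h2
  rw [div_mul_cancel₀ _ (ne_of_gt hbc)] at h1 h2
  have hsum : b / (b + c) + c / (b + c) = 1 := by field_simp
  have key : b / (b + c) * φ (b + c) + c / (b + c) * φ (b + c) = φ (b + c) := by
    rw [← add_mul, hsum, one_mul]
  linarith

/-- For a strictly convex self-control cost, the compromising price
strictly exceeds the indulging price whenever `e(y*) < e(x) < e(z*)`. -/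
theorem stmt_11 (φ : ℝ → ℝ)
    (hconv : StrictConvexOn ℝ (Set.Ici (0:ℝ)) φ)
    (hcont : ContinuousOn φ (Set.Ici (0:ℝ)))
    (hmono : StrictMonoOn φ (Set.Ici (0:ℝ)))
    (hφ0 : φ 0 = 0)
    (ux vx uz vz ey pz pind pcomp : ℝ)
    (hyx : ey < vx - ux) (hxz : vx - ux < vz - uz)
    (hpz_nn : 0 ≤ vz - pz - ey)
    (hind_nn : 0 ≤ vx - pind - ey)
    (hcomp_nn : 0 ≤ vz - pz - vx + pcomp)
    (hpz : pz = uz + φ (vz - pz - ey))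
    (hind : pind = ux + φ (vx - pind - ey))
    (hcomp : pcomp = ux + pz - uz - φ (vz - pz - vx + pcomp)) :
    pcomp > pind := by
  by_contra h
  push_neg at h
  set A := vz - pz - ey with hA
  set B := vx - pind - ey with hB
  set C := vz - pz - vx + pcomp with hC
  -- B > 0
  have hBpos : 0 < B := by
    rcases lt_or_eq_of_le hind_nn with h' | h'
    · exact h'
    · exfalso
      have : φ B = 0 := by rw [← h', hφ0]
      have : pind = ux := by rw [hind, this]; ring
      have : B = vx - ux - ey := by rw [hB, this]
      linarith [hyx, h'.symm ▸ this]
  -- B + C ≤ A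
  have hBC : B + C ≤ A := by
    have : A - C = vx - pcomp - ey := by rw [hA, hC]; ring
    linarith
  have hAnn : (0:ℝ) ≤ A := hpz_nn
  -- C > 0
  have hCpos : 0 < C := by
    rcases lt_or_eq_of_le hcomp_nn with h' | h'
    · exact h'
    · exfalso
      have hφC : φ C = 0 := by rw [← h', hφ0]
      have hpc : pcomp = ux + φ A := by rw [hcomp, hpz]; rw [hφC]; ring
      have hφAB : φ A ≤ φ B := by
        have : pind = ux + φ B := hind
        linarith
      have hAB : A ≤ B := by
        by_contra hAB
        push_neg at hAB
        exact absurd (hmono (le_of_lt hBpos) hAnn hAB) (not_lt.mpr hφAB)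
      have hABeq : A = B := le_antisymm hAB (by linarith)
      -- then vz - pz = vx - pind, derive vz - uz = vx - ux
      have h1 : vz - pz = vx - pind := by
        have := hABeq
        rw [hA, hB] at this
        linarith
      have h2 : φ A = φ B := by rw [hABeq]
      have : vz - uz = vx - ux := by
        have e1 : pz = uz + φ A := hpz
        have e2 : pind = ux + φ B := hind
        rw [e1, e2, h2] at h1
        linarith
      linarith
  -- superadditivity contradiction
  have hsup := superadd_of_strictConvex φ hconv hφ0 hBpos hCpos
  have hmono' : φ (B + C) ≤ φ A :=
    hmono.monotoneOn (Set.mem_Ici.mpr (by linarith)) (Set.mem_Ici.mpr hAnn) hBC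
  have hφA : φ A = pz - uz := by linarith [hpz]
  have hφB : φ B = pind - ux := by linarith [hind]
  have hφC : φ C = ux + pz - uz - pcomp := by linarith [hcomp]
  linarith
end

section
/- In the piecewise linear model, the consumer's welfare under the optimal contract (equal to u(sold) - price of sold alternative) is weakly increasing in the willpower parameter w: for w ∈ [ (e(z*)-e(x_l))/(1+l), (e(z*)-e(y*))/(1+l) ), welfare equals u(x_l) - p^comp(x_l, w) where p^comp(x_l, w) = (u(x_l)+l v(x_l))/(1+l) + ((k-l)/((1+k)(1+l)))e(z*) - (k/(1+k))e(y*) - ((k-l)/(1+k))w, which is strictly increasing in w; and for w ≥ (e(z*)-e(y*))/(1+l) welfare equals u(x_l) - (u(x_l)+l(v(x_l)-e(y*)))/(1+l), which is constant in w and continuous at the boundary w = (e(z*)-e(y*))/(1+l). -/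
/-- Consumer welfare under the optimal contract is weakly increasing in
the willpower `w`: strictly increasing on the compromising range,
constant on the indulging range, and continuous at the boundary. -/
theorem stmt_19 (k l : ℝ) (hk : 1 < k) (hl1 : l < 1) (hl0 : 0 < l)
    (uxl vxl ez ey : ℝ) (hyx : ey < vxl - uxl) (hxz : vxl - uxl < ez) :
    let a : ℝ := (ez - (vxl - uxl)) / (1 + l)
    let b : ℝ := (ez - ey) / (1 + l)
    let pcomp : ℝ → ℝ := fun w => (uxl + l * vxl) / (1 + l)
      + ((k - l) / ((1 + k) * (1 + l))) * ez
      - (k / (1 + k)) * ey - ((k - l) / (1 + k)) * w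
    let pind : ℝ := (uxl + l * (vxl - ey)) / (1 + l)
    let W : ℝ → ℝ := fun w => if w < b then uxl - pcomp w else uxl - pind
    StrictMonoOn (fun w => uxl - pcomp w) (Set.Ico a b) ∧
    (∀ w, b ≤ w → W w = uxl - pind) ∧
    MonotoneOn W (Set.Ici a) ∧
    ContinuousAt W b := by
  intro a b pcomp pind W
  have hl : (0:ℝ) < 1 + l := by linarith
  have hk' : (0:ℝ) < 1 + k := by linarith
  have hc : (0:ℝ) < (k - l) / (1 + k) := div_pos (by linarith) hk'
  -- key linear identity: pcomp w = pind + ((k-l)/(1+k)) * (b - w)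
  have key : ∀ w, pcomp w = pind + ((k - l) / (1 + k)) * (b - w) := by
    intro w
    simp only [pcomp, pind, b]
    field_simp
    ring
  have hmono : ∀ x y : ℝ, x < y → pcomp y < pcomp x := by
    intro x y hxy
    rw [key, key]
    nlinarith
  refine ⟨?_, ?_, ?_, ?_⟩
  · intro x _ y _ hxy
    have := hmono x y hxy
    simpa using by linarith
  · intro w hw
    simp only [W, if_neg (not_lt.mpr hw)]
  · -- monotone on Ici a
    intro x _ y _ hxy
    show (if x < b then uxl - pcomp x else uxl - pind) ≤
      (if y < b then uxl - pcomp y else uxl - pind)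
    by_cases hy : y < b
    · have hx : x < b := lt_of_le_of_lt hxy hy
      rw [if_pos hx, if_pos hy]
      rcases eq_or_lt_of_le hxy with rfl | h
      · exact le_refl _
      · have := hmono x y h; linarith
    · rw [if_neg hy]
      by_cases hx : x < b
      · rw [if_pos hx]
        have : pind ≤ pcomp x := by rw [key]; nlinarith
        linarith
      · rw [if_neg hx]
  · have hWeq : W = fun w => uxl - max (pcomp w) pind := by
      funext w
      simp only [W]
      by_cases hw : w < b
      · have : pind ≤ pcomp w := by rw [key]; nlinarith
        rw [if_pos hw, max_eq_left this]
      · have : pcomp w ≤ pind := by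
          rw [key]; push_neg at hw; nlinarith
        rw [if_neg hw, max_eq_right this]
    rw [hWeq]
    have hpc : Continuous pcomp := by
      show Continuous fun w => (uxl + l * vxl) / (1 + l)
        + ((k - l) / ((1 + k) * (1 + l))) * ez
        - (k / (1 + k)) * ey - ((k - l) / (1 + k)) * w
      fun_prop
    exact (continuous_const.sub (hpc.max continuous_const)).continuousAt
end
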